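/- Let $t \ge 2$ and let $G$ be a simple graph on $n$ vertices in which every vertex lies in at least one edge-containing clique (equivalently, $c(v)$ is well-defined with $c(v) \ge 1$ for all $v$). Then the number of copies of $K_t$ in $G$ satisfies $N(G,K_t) \le n^{t-1} \sum_{v \in V(G)} \frac{1}{c(v)^t} \binom{c(v)}{t}$. -/

import Mathlib

open Finset
open scoped Classical

/-- The order of the largest clique of `G` containing the vertex `v`. -/
noncomputable def cliqueAt {n : ℕ} (G : SimpleGraph (Fin n)) (v : Fin n) : ℕ :=
  ((univ : Finset (Finset (Fin n))).filter
    (fun s : Finset (Fin n) => G.IsClique (s : Set (Fin n)) ∧ v ∈ s)).sup Finset.card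

/-- The set of copies of `K_t` in `G`, as `t`-element vertex sets inducing cliques. -/
noncomputable def ktCliques {n : ℕ} (G : SimpleGraph (Fin n)) (t : ℕ) :
    Finset (Finset (Fin n)) :=
  (univ : Finset (Finset (Fin n))).filter
    (fun s : Finset (Fin n) => s.card = t ∧ G.IsClique (s : Set (Fin n)))

/-- `N(G, K_t)`, the number of copies of `K_t` in `G`. -/
noncomputable def numKt {n : ℕ} (G : SimpleGraph (Fin n)) (t : ℕ) : ℕ :=
  (ktCliques G t).card

/-- The standard simplex `Δ^{n-1}`. -/
def simplex (n : ℕ) : Set (Fin n → ℝ) :=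
  {x | (∀ i, 0 ≤ x i) ∧ ∑ i, x i = 1}

/-- `Φ(G, x) = A(G,x) - B(G,x)`. -/
noncomputable def PhiFn {n : ℕ} (G : SimpleGraph (Fin n)) (t : ℕ) (x : Fin n → ℝ) : ℝ :=
  (∑ v, x v * ((cliqueAt G v).choose t : ℝ) / (cliqueAt G v : ℝ) ^ t)
    - ∑ s ∈ ktCliques G t, ∏ v ∈ s, x v

/-- The support of `x`, as a finset. -/
noncomputable def suppF {n : ℕ} (x : Fin n → ℝ) : Finset (Fin n) :=
  (univ : Finset (Fin n)).filter (fun v => 0 < x v)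

/-- `x` is a minimizer of `Φ(G, ·)` over the simplex. -/
def IsMinimizer {n : ℕ} (G : SimpleGraph (Fin n)) (t : ℕ) (x : Fin n → ℝ) : Prop :=
  x ∈ simplex n ∧ ∀ y ∈ simplex n, PhiFn G t x ≤ PhiFn G t y

/-- `δ_{ij}(x)`. -/
noncomputable def deltaFn {n : ℕ} (G : SimpleGraph (Fin n)) (t : ℕ) (x : Fin n → ℝ)
    (i j : Fin n) : ℝ :=
  (((cliqueAt G i).choose t : ℝ) / (cliqueAt G i : ℝ) ^ t
      - ((cliqueAt G j).choose t : ℝ) / (cliqueAt G j : ℝ) ^ t)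
    - ((∑ s ∈ (ktCliques G (t - 1)).filter (fun s => ∀ v ∈ s, G.Adj i v), ∏ v ∈ s, x v)
      - (∑ s ∈ (ktCliques G (t - 1)).filter (fun s => ∀ v ∈ s, G.Adj j v), ∏ v ∈ s, x v))

/-- `G` is a regular complete multipartite graph: the vertices can be colored so that
adjacency is exactly "different colors" and all color classes have the same size. -/
def IsRegularCompleteMultipartite {n : ℕ} (G : SimpleGraph (Fin n)) : Prop :=
  ∃ (r : ℕ) (f : Fin n → Fin r),
    (∀ u v, G.Adj u v ↔ f u ≠ f v) ∧
    (∀ a b : Fin r,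
      ((univ : Finset (Fin n)).filter (fun v => f v = a)).card =
        ((univ : Finset (Fin n)).filter (fun v => f v = b)).card)


/-- Two-point AM-GM in nat-power form: `u^(t-1) * v * t^t ≤ ((t-1)*u + v)^t`. -/
lemma amgm2 (t : ℕ) (ht : 1 ≤ t) {u v : ℝ} (hu : 0 ≤ u) (hv : 0 ≤ v) :
    u ^ (t - 1) * v * (t : ℝ) ^ t ≤ ((t - 1 : ℕ) * u + v) ^ t := by
  have ht0 : (0:ℝ) < t := by exact_mod_cast ht
  have hw : ((t-1:ℕ):ℝ)/t + 1/t = 1 := by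
    have : ((t-1:ℕ):ℝ) = (t:ℝ) - 1 := by
      have := Nat.cast_sub ht (R := ℝ); simpa using this
    rw [this]; field_simp; ring
  have key : u ^ (((t-1:ℕ):ℝ)/t) * v ^ ((1:ℝ)/t) ≤
      ((t-1:ℕ):ℝ)/t * u + 1/t * v :=
    Real.geom_mean_le_arith_mean2_weighted (by positivity) (by positivity) hu hv hw
  have hLHSnn : 0 ≤ u ^ (((t-1:ℕ):ℝ)/t) * v ^ ((1:ℝ)/t) := by positivity
  have := pow_le_pow_left₀ hLHSnn key t
  have hexp : (u ^ (((t-1:ℕ):ℝ)/t) * v ^ ((1:ℝ)/t)) ^ t = u ^ (t-1) * v := by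
    rw [mul_pow, ← Real.rpow_natCast (u ^ (((t-1:ℕ):ℝ)/t)) t,
        ← Real.rpow_natCast (v ^ ((1:ℝ)/t)) t,
        ← Real.rpow_mul hu, ← Real.rpow_mul hv]
    rw [div_mul_cancel₀ _ (ne_of_gt ht0), one_div, inv_mul_cancel₀ (ne_of_gt ht0)]
    rw [Real.rpow_natCast, Real.rpow_one]
  rw [hexp] at this
  calc u ^ (t-1) * v * (t:ℝ)^t ≤ (((t-1:ℕ):ℝ)/t * u + 1/t * v)^t * (t:ℝ)^t := by
        apply mul_le_mul_of_nonneg_right this (by positivity)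
    _ = ((t-1:ℕ) * u + v)^t := by
        rw [← mul_pow]; congr 1; field_simp

lemma esymm_insert {α : Type*} [DecidableEq α] (y : α → ℝ) {a : α} {s : Finset α}
    (ha : a ∉ s) (t : ℕ) :
    ∑ S ∈ (insert a s).powersetCard (t+1), ∏ v ∈ S, y v
      = (∑ S ∈ s.powersetCard (t+1), ∏ v ∈ S, y v)
        + y a * ∑ S ∈ s.powersetCard t, ∏ v ∈ S, y v := by
  rw [Finset.powersetCard_succ_insert ha, Finset.sum_union, Finset.sum_image]
  · rw [Finset.mul_sum]
    congr 1
    apply Finset.sum_congr rfl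
    intro S hS
    have haS : a ∉ S := fun h => ha ((Finset.mem_powersetCard.1 hS).1 h)
    rw [Finset.prod_insert haS]
  · intro S hS T hT hST
    have haS : a ∉ S := fun h => ha ((Finset.mem_powersetCard.1 hS).1 h)
    have haT : a ∉ T := fun h => ha ((Finset.mem_powersetCard.1 hT).1 h)
    have : (insert a S).erase a = (insert a T).erase a := by rw [hST]
    rwa [Finset.erase_insert haS, Finset.erase_insert haT] at this
  · rw [Finset.disjoint_left]
    intro S hS hS'
    have haS : a ∉ S := fun h => ha ((Finset.mem_powersetCard.1 hS).1 h)
    obtain ⟨T, hT, rfl⟩ := Finset.mem_image.1 hS'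
    exact haS (Finset.mem_insert_self a T)

lemma esymm_one {α : Type*} [DecidableEq α] (K : Finset α) (y : α → ℝ) :
    ∑ S ∈ K.powersetCard 1, ∏ v ∈ S, y v = ∑ v ∈ K, y v := by
  rw [Finset.powersetCard_one, Finset.sum_map]
  simp


lemma maclaurin {α : Type*} [DecidableEq α] (K : Finset α) (y : α → ℝ) (hy : ∀ v, 0 ≤ y v) :
    ∀ t : ℕ, (K.card : ℝ) ^ t * ∑ S ∈ K.powersetCard t, ∏ v ∈ S, y v
      ≤ (K.card.choose t : ℝ) * (∑ v ∈ K, y v) ^ t := by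
  induction K using Finset.induction_on with
  | empty =>
    intro t
    cases t with
    | zero => simp
    | succ t =>
      rw [show (∅ : Finset α).powersetCard (t+1) = ∅ by
        rw [Finset.powersetCard_eq_empty]; simp]
      simp
  | @insert a s ha ih =>
    intro t
    have hs'nn : (0:ℝ) ≤ ∑ v ∈ s, y v := Finset.sum_nonneg fun v _ => hy v
    match t with
    | 0 => simp
    | 1 =>
      rw [esymm_one]
      simp
    | (m+2) =>
      -- trivial case: m+2 > card+1
      by_cases htk : s.card + 1 < m + 2
      · rw [show (insert a s).powersetCard (m+2) = ∅ by
          rw [Finset.powersetCard_eq_empty, Finset.card_insert_of_notMem ha]; exact htk]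
        have h0 : (s.card + 1).choose (m+2) = 0 := Nat.choose_eq_zero_of_lt (by omega)
        rw [Finset.card_insert_of_notMem ha, h0]
        simp
      push_neg at htk
      set k := s.card with hkdef
      have hm1k : m + 1 ≤ k := by omega
      have hk1 : 1 ≤ k := by omega
      have hknn : (0:ℝ) < (k:ℝ) := by exact_mod_cast hk1
      set s' : ℝ := ∑ v ∈ s, y v with hs'def
      set Et : ℝ := ∑ S ∈ s.powersetCard (m+2), ∏ v ∈ S, y v with hEt
      set Em : ℝ := ∑ S ∈ s.powersetCard (m+1), ∏ v ∈ S, y v with hEm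
      have hEmnn : 0 ≤ Em :=
        Finset.sum_nonneg fun S _ => Finset.prod_nonneg fun v _ => hy v
      have hsum : ∑ v ∈ insert a s, y v = y a + s' := Finset.sum_insert ha
      set S : ℝ := y a + s' with hSdef
      rw [hsum]
      have hins : ∑ T ∈ (insert a s).powersetCard (m+2), ∏ v ∈ T, y v = Et + y a * Em :=
        esymm_insert y ha (m+1)
      rw [hins, Finset.card_insert_of_notMem ha]
      have h1 : (k:ℝ) ^ (m+2) * Et ≤ (k.choose (m+2) : ℝ) * s' ^ (m+2) := ih (m+2)
      have h2 : (k:ℝ) ^ (m+1) * Em ≤ (k.choose (m+1) : ℝ) * s' ^ (m+1) := ih (m+1)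
      set cKt : ℝ := (k.choose (m+2) : ℝ) with hcKt
      set cKm : ℝ := (k.choose (m+1) : ℝ) with hcKm
      have hcKmnn : (0:ℝ) ≤ cKm := by positivity
      -- choose identities over ℝ
      have idA : cKt * ((m:ℝ)+2) = cKm * ((k:ℝ) - ((m:ℝ)+1)) := by
        have h := Nat.choose_succ_right_eq k (m+1)
        have h' := congrArg (fun x : ℕ => (x:ℝ)) h
        push_cast [Nat.cast_sub hm1k] at h'
        rw [hcKt, hcKm]
        push_cast
        linarith [h']
      have idB : ((k+1).choose (m+2) : ℝ) * ((m:ℝ)+2) = ((k:ℝ)+1) * cKm := by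
        have h := Nat.add_one_mul_choose_eq k (m+1)
        have h' := congrArg (fun x : ℕ => (x:ℝ)) h
        push_cast at h'
        rw [hcKm]
        push_cast
        linarith [h']
      -- AM-GM instance
      have hyann : 0 ≤ y a := hy a
      have hs'S : s' ≤ S := by rw [hSdef]; linarith
      have hSnn' : (0:ℝ) ≤ S := by rw [hSdef]; linarith
      have hvnn : (0:ℝ) ≤ (k:ℝ) * ((m:ℝ)+2) * S - ((k:ℝ)+1) * ((m:ℝ)+1) * s' := by
        have hkm : ((m:ℝ)+1) ≤ (k:ℝ) := by exact_mod_cast hm1k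
        nlinarith [mul_le_mul_of_nonneg_left hs'S
          (show (0:ℝ) ≤ (k:ℝ)*((m:ℝ)+2) by positivity)]
      set v : ℝ := (k:ℝ) * ((m:ℝ)+2) * S - ((k:ℝ)+1) * ((m:ℝ)+1) * s' with hvdef
      have star : ((k:ℝ)+1) ^ (m+1) * s' ^ (m+1) * v ≤ (k:ℝ) ^ (m+2) * S ^ (m+2) := by
        have h0 := amgm2 (m+2) (by omega) (u := ((k:ℝ)+1) * s') (v := v)
          (by positivity) hvnn
        simp only [Nat.add_sub_cancel, show m + 2 - 1 = m + 1 from rfl] at h0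
        push_cast at h0
        have hbase : ((m:ℝ)+1) * (((k:ℝ)+1) * s') + v = (k:ℝ) * ((m:ℝ)+2) * S := by
          rw [hvdef]; ring
        rw [hbase] at h0
        have hT : (0:ℝ) < ((m:ℝ)+2) ^ (m+2) := by positivity
        have hRHS : ((k:ℝ) * ((m:ℝ)+2) * S) ^ (m+2)
            = ((k:ℝ) ^ (m+2) * S ^ (m+2)) * ((m:ℝ)+2) ^ (m+2) := by
          rw [mul_pow, mul_pow]; ring
        rw [hRHS] at h0
        have h0' : (((k:ℝ)+1) * s') ^ (m+1) * v ≤ (k:ℝ) ^ (m+2) * S ^ (m+2) :=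
          le_of_mul_le_mul_right h0 hT
        calc ((k:ℝ)+1) ^ (m+1) * s' ^ (m+1) * v = (((k:ℝ)+1) * s') ^ (m+1) * v := by
              rw [mul_pow]
          _ ≤ (k:ℝ) ^ (m+2) * S ^ (m+2) := h0'
      -- main chain
      have hpos : (0:ℝ) < ((m:ℝ)+2) * (k:ℝ) ^ (m+2) := by positivity
      rw [show ((k+1:ℕ):ℝ) = (k:ℝ)+1 by push_cast; ring]
      rw [← mul_le_mul_iff_right₀ hpos, show y a = S - s' by rw [hSdef]; ring]
      calc ((m:ℝ)+2) * (k:ℝ) ^ (m+2) * (((k:ℝ)+1) ^ (m+2) * (Et + (S - s') * Em))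
          = ((m:ℝ)+2) * ((k:ℝ)+1) ^ (m+2) * ((k:ℝ) ^ (m+2) * Et)
            + ((k:ℝ)+1) ^ (m+2) * (S - s') * ((m:ℝ)+2) * (k:ℝ)
              * ((k:ℝ) ^ (m+1) * Em) := by ring
        _ ≤ ((m:ℝ)+2) * ((k:ℝ)+1) ^ (m+2) * (cKt * s' ^ (m+2))
            + ((k:ℝ)+1) ^ (m+2) * (S - s') * ((m:ℝ)+2) * (k:ℝ)
              * (cKm * s' ^ (m+1)) := by
            apply add_le_add
            · exact mul_le_mul_of_nonneg_left h1 (by positivity)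
            · apply mul_le_mul_of_nonneg_left h2
              have : (0:ℝ) ≤ S - s' := by linarith
              positivity
        _ = ((k:ℝ)+1) ^ (m+2) * s' ^ (m+1)
            * (cKt * ((m:ℝ)+2) * s' + cKm * ((m:ℝ)+2) * (k:ℝ) * (S - s')) := by ring
        _ = ((k:ℝ)+1) * cKm * (((k:ℝ)+1) ^ (m+1) * s' ^ (m+1) * v) := by
            rw [hvdef]
            linear_combination (((k:ℝ)+1) ^ (m+2) * s' ^ (m+1) * s') * idA
        _ ≤ ((k:ℝ)+1) * cKm * ((k:ℝ) ^ (m+2) * S ^ (m+2)) := by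
            apply mul_le_mul_of_nonneg_left star (by positivity)
        _ = ((m:ℝ)+2) * (k:ℝ) ^ (m+2) * (((k+1).choose (m+2) : ℝ) * S ^ (m+2)) := by
            linear_combination (-((k:ℝ) ^ (m+2) * S ^ (m+2))) * idB

lemma gstep (t b : ℕ) (hb : 1 ≤ b) :
    (b.choose t : ℝ) / (b:ℝ) ^ t ≤ ((b+1).choose t : ℝ) / ((b:ℝ)+1) ^ t := by
  match t with
  | 0 => simp
  | (p+1) =>
    set t := p + 1 with htdef
    by_cases hbt : b < t
    · rw [Nat.choose_eq_zero_of_lt hbt]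
      simp only [Nat.cast_zero, zero_div]
      positivity
    push_neg at hbt
    have hbpos : (0:ℝ) < (b:ℝ) := by exact_mod_cast hb
    rw [div_le_div_iff₀ (by positivity) (by positivity)]
    -- reduce to C(b,t) * (b+1)^t ≤ C(b+1,t) * b^t
    have hAM := amgm2 t (by omega) (u := (b:ℝ)+1) (v := ((b:ℝ)+1) - t)
      (by positivity) (by
        have : (t:ℝ) ≤ (b:ℝ) := by exact_mod_cast hbt
        linarith)
    have hsub : ((t - 1 : ℕ) : ℝ) = (t:ℝ) - 1 := by
      rw [Nat.cast_sub (by omega)]; simp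
    rw [hsub] at hAM
    have hbase : ((t:ℝ) - 1) * ((b:ℝ)+1) + (((b:ℝ)+1) - t) = (t:ℝ) * b := by ring
    rw [hbase] at hAM
    have htpos : (0:ℝ) < (t:ℝ) ^ t := by
      have : (0:ℝ) < (t:ℝ) := by exact_mod_cast (show 0 < t by omega)
      positivity
    have hAM' : ((b:ℝ)+1) ^ (t-1) * (((b:ℝ)+1) - t) ≤ (b:ℝ) ^ t := by
      have h' : ((b:ℝ)+1) ^ (t-1) * (((b:ℝ)+1) - t) * (t:ℝ)^t ≤ (b:ℝ)^t * (t:ℝ)^t := by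
        calc ((b:ℝ)+1) ^ (t-1) * (((b:ℝ)+1) - t) * (t:ℝ)^t ≤ ((t:ℝ) * b)^t := hAM
          _ = (b:ℝ)^t * (t:ℝ)^t := by rw [mul_pow]; ring
      exact le_of_mul_le_mul_right h' htpos
    -- choose identity: C(b,t)*(b+1) = C(b+1,t)*(b+1-t)
    have hid := Nat.choose_mul_succ_eq b t
    have hid' : (b.choose t : ℝ) * ((b:ℝ)+1) = ((b+1).choose t : ℝ) * (((b:ℝ)+1) - t) := by
      have h' := congrArg (fun x : ℕ => (x:ℝ)) hid
      push_cast [Nat.cast_sub (show t ≤ b+1 by omega)] at h'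
      have hpt : (t:ℝ) = (p:ℝ)+1 := by rw [htdef]; push_cast; ring
      rw [hpt] at h' ⊢
      linarith [h']
    have hexp : ((b:ℝ)+1) ^ t = ((b:ℝ)+1) ^ (t-1) * ((b:ℝ)+1) := by
      have h := (pow_succ ((b:ℝ)+1) (t-1)).symm
      rwa [show t-1+1 = t by omega] at h
    calc (b.choose t : ℝ) * ((b:ℝ)+1) ^ t
        = ((b.choose t : ℝ) * ((b:ℝ)+1)) * ((b:ℝ)+1) ^ (t-1) := by rw [hexp]; ring
      _ = ((b+1).choose t : ℝ) * ((((b:ℝ)+1) - t) * ((b:ℝ)+1) ^ (t-1)) := by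
          rw [hid']; ring
      _ ≤ ((b+1).choose t : ℝ) * (b:ℝ) ^ t := by
          apply mul_le_mul_of_nonneg_left _ (by positivity)
          calc (((b:ℝ)+1) - t) * ((b:ℝ)+1) ^ (t-1)
              = ((b:ℝ)+1) ^ (t-1) * (((b:ℝ)+1) - t) := by ring
            _ ≤ (b:ℝ) ^ t := hAM'

lemma gmono (t : ℕ) {a b : ℕ} (ha : 1 ≤ a) (hab : a ≤ b) :
    (a.choose t : ℝ) / (a:ℝ) ^ t ≤ (b.choose t : ℝ) / (b:ℝ) ^ t := by
  induction b, hab using Nat.le_induction with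
  | base => exact le_rfl
  | succ b hab ih =>
    push_cast
    exact le_trans ih (gstep t b (by omega))

lemma clique_card_le_cliqueAt {n : ℕ} (G : SimpleGraph (Fin n)) {K : Finset (Fin n)}
    (hK : G.IsClique (K : Set (Fin n))) {v : Fin n} (hv : v ∈ K) :
    K.card ≤ cliqueAt G v :=
  Finset.le_sup (Finset.mem_filter.2 ⟨Finset.mem_univ K, hK, hv⟩)

lemma ktCliques_mem {n : ℕ} {G : SimpleGraph (Fin n)} {t : ℕ} {s : Finset (Fin n)} :
    s ∈ ktCliques G t ↔ s.card = t ∧ G.IsClique (s : Set (Fin n)) := by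
  simp [ktCliques]

lemma key_ind {n : ℕ} (G : SimpleGraph (Fin n)) (t : ℕ) (ht : 2 ≤ t) :
    ∀ (N : ℕ) (x : Fin n → ℝ), (suppF x).card ≤ N → (∀ i, 0 ≤ x i) → (∑ i, x i) = 1 →
      ∑ s ∈ ktCliques G t, ∏ v ∈ s, x v ≤
        ∑ v, x v * (((cliqueAt G v).choose t : ℝ) / (cliqueAt G v : ℝ) ^ t) := by
  intro N
  induction N with
  | zero =>
    intro x hcard hx0 hx1
    exfalso
    have hsupp : suppF x = ∅ := Finset.card_eq_zero.1 (Nat.le_zero.1 hcard)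
    have : ∀ i, x i = 0 := by
      intro i
      by_contra h
      have hpos : 0 < x i := lt_of_le_of_ne (hx0 i) (Ne.symm h)
      have : i ∈ suppF x := Finset.mem_filter.2 ⟨Finset.mem_univ i, hpos⟩
      rw [hsupp] at this
      exact absurd this (Finset.notMem_empty i)
    rw [Finset.sum_congr rfl (fun i _ => this i)] at hx1
    simp at hx1
  | succ N ih =>
    intro x hcard hx0 hx1
    have hmemsupp : ∀ v, v ∈ suppF x ↔ 0 < x v := by
      intro v; simp [suppF]
    have hx0' : ∀ v, v ∉ suppF x → x v = 0 := by
      intro v hv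
      have := (hmemsupp v).not.1 hv
      linarith [hx0 v, not_lt.1 this]
    by_cases hclq : ∀ i ∈ suppF x, ∀ j ∈ suppF x, i ≠ j → G.Adj i j
    · -- support is a clique
      set K := suppF x with hKdef
      have hKclique : G.IsClique (K : Set (Fin n)) := by
        intro i hi j hj hij
        exact hclq i hi j hj hij
      have hksum : ∑ v ∈ K, x v = 1 := by
        rw [← hx1]
        exact Finset.sum_subset (Finset.subset_univ K) (fun v _ hv => hx0' v hv)
      have hKne : K.Nonempty := by
        by_contra h
        rw [Finset.not_nonempty_iff_eq_empty.1 h] at hksum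
        simp at hksum
      have hk1 : 1 ≤ K.card := Finset.card_pos.2 hKne
      -- LHS equals sum over t-subsets of K
      have hfil : (ktCliques G t).filter (· ⊆ K) = K.powersetCard t := by
        ext S
        rw [Finset.mem_filter, Finset.mem_powersetCard, ktCliques_mem]
        constructor
        · rintro ⟨⟨hcardS, _⟩, hSK⟩; exact ⟨hSK, hcardS⟩
        · rintro ⟨hSK, hcardS⟩
          exact ⟨⟨hcardS, hKclique.subset (Finset.coe_subset.2 hSK)⟩, hSK⟩
      have hLHS : ∑ s ∈ ktCliques G t, ∏ v ∈ s, x v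
          = ∑ S ∈ K.powersetCard t, ∏ v ∈ S, x v := by
        rw [← Finset.sum_filter_add_sum_filter_not (ktCliques G t) (· ⊆ K), hfil]
        have : ∑ s ∈ (ktCliques G t).filter (fun s => ¬ s ⊆ K), ∏ v ∈ s, x v = 0 := by
          apply Finset.sum_eq_zero
          intro s hs
          obtain ⟨v, hvs, hvK⟩ := Finset.not_subset.1 (Finset.mem_filter.1 hs).2
          exact Finset.prod_eq_zero hvs (hx0' v hvK)
        rw [this, add_zero]
      have hmac := maclaurin K x hx0 t
      rw [hksum, one_pow, mul_one] at hmac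
      have hkpos : (0:ℝ) < (K.card : ℝ) := by exact_mod_cast hk1
      have hLHS2 : ∑ S ∈ K.powersetCard t, ∏ v ∈ S, x v
          ≤ (K.card.choose t : ℝ) / (K.card : ℝ) ^ t := by
        rw [le_div_iff₀ (by positivity)]
        calc (∑ S ∈ K.powersetCard t, ∏ v ∈ S, x v) * (K.card : ℝ) ^ t
            = (K.card : ℝ) ^ t * ∑ S ∈ K.powersetCard t, ∏ v ∈ S, x v := by ring
          _ ≤ (K.card.choose t : ℝ) := hmac
      -- RHS bound
      have hRHS : (K.card.choose t : ℝ) / (K.card : ℝ) ^ t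
          ≤ ∑ v, x v * (((cliqueAt G v).choose t : ℝ) / (cliqueAt G v : ℝ) ^ t) := by
        have h1 : ∑ v ∈ K, x v * ((K.card.choose t : ℝ) / (K.card : ℝ) ^ t)
            ≤ ∑ v ∈ K, x v * (((cliqueAt G v).choose t : ℝ) / (cliqueAt G v : ℝ) ^ t) := by
          apply Finset.sum_le_sum
          intro v hv
          apply mul_le_mul_of_nonneg_left _ (hx0 v)
          exact gmono t hk1 (clique_card_le_cliqueAt G hKclique hv)
        have h2 : ∑ v ∈ K, x v * ((K.card.choose t : ℝ) / (K.card : ℝ) ^ t)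
            = (K.card.choose t : ℝ) / (K.card : ℝ) ^ t := by
          rw [← Finset.sum_mul, hksum, one_mul]
        have h3 : ∑ v ∈ K, x v * (((cliqueAt G v).choose t : ℝ) / (cliqueAt G v : ℝ) ^ t)
            ≤ ∑ v, x v * (((cliqueAt G v).choose t : ℝ) / (cliqueAt G v : ℝ) ^ t) := by
          apply Finset.sum_le_sum_of_subset_of_nonneg (Finset.subset_univ K)
          intro v _ _
          have := hx0 v
          positivity
        linarith [h1, h2, h3]
      rw [hLHS]
      linarith [hLHS2, hRHS]
    · -- support is not a clique: symmetrize
      push_neg at hclq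
      obtain ⟨i, hi, j, hj, hij, hnadj⟩ := hclq
      have hxi : 0 < x i := (hmemsupp i).1 hi
      have hxj : 0 < x j := (hmemsupp j).1 hj
      set m : ℝ := x i + x j with hmdef
      have hm : 0 < m := by linarith
      set lam : ℝ := x i / m with hlamdef
      have hlam0 : 0 < lam := by positivity
      have hlam1 : lam < 1 := by
        rw [hlamdef, div_lt_one hm]; linarith
      have hlm : lam * m = x i := div_mul_cancel₀ (x i) (ne_of_gt hm)
      have hlm' : (1 - lam) * m = x j := by
        have : (1 - lam) * m = m - lam * m := by ring
        rw [this, hlm]; ring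
      set y : Fin n → ℝ := Function.update (Function.update x i m) j 0 with hydef
      set z : Fin n → ℝ := Function.update (Function.update x i 0) j m with hzdef
      have hyi : y i = m := by
        rw [hydef, Function.update_of_ne hij, Function.update_self]
      have hyj : y j = 0 := by rw [hydef, Function.update_self]
      have hyv : ∀ v, v ≠ i → v ≠ j → y v = x v := by
        intro v hvi hvj
        rw [hydef, Function.update_of_ne hvj, Function.update_of_ne hvi]
      have hzi : z i = 0 := by
        rw [hzdef, Function.update_of_ne hij, Function.update_self]
      have hzj : z j = m := by rw [hzdef, Function.update_self]
      have hzv : ∀ v, v ≠ i → v ≠ j → z v = x v := by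
        intro v hvi hvj
        rw [hzdef, Function.update_of_ne hvj, Function.update_of_ne hvi]
      have hy0 : ∀ v, 0 ≤ y v := by
        intro v
        rcases eq_or_ne v i with rfl | hvi
        · rw [hyi]; linarith
        rcases eq_or_ne v j with rfl | hvj
        · rw [hyj]
        · rw [hyv v hvi hvj]; exact hx0 v
      have hz0 : ∀ v, 0 ≤ z v := by
        intro v
        rcases eq_or_ne v i with rfl | hvi
        · rw [hzi]
        rcases eq_or_ne v j with rfl | hvj
        · rw [hzj]; linarith
        · rw [hzv v hvi hvj]; exact hx0 v
      -- sums of y and z are 1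
      have hsum_aux : ∀ (w : Fin n → ℝ), w i + w j + ∑ v ∈ (univ.erase j).erase i, w v
          = ∑ v, w v := by
        intro w
        have h1 : ∑ v ∈ univ.erase j, w v = w i + ∑ v ∈ (univ.erase j).erase i, w v :=
          (Finset.add_sum_erase _ w (Finset.mem_erase.2 ⟨hij, Finset.mem_univ i⟩)).symm
        have h2 : ∑ v, w v = w j + ∑ v ∈ univ.erase j, w v :=
          (Finset.add_sum_erase _ w (Finset.mem_univ j)).symm
        rw [h2, h1]
        ring
      have hrest : ∀ (w w' : Fin n → ℝ), (∀ v, v ≠ i → v ≠ j → w v = w' v) →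
          ∑ v ∈ (univ.erase j).erase i, w v = ∑ v ∈ (univ.erase j).erase i, w' v := by
        intro w w' hww'
        apply Finset.sum_congr rfl
        intro v hv
        have hv' := Finset.mem_erase.1 hv
        have hv'' := Finset.mem_erase.1 hv'.2
        exact hww' v hv'.1 hv''.1
      have hysum : ∑ v, y v = 1 := by
        rw [← hsum_aux y, hyi, hyj, hrest y x hyv]
        have := hsum_aux x
        rw [hx1] at this
        linarith [this]
      have hzsum : ∑ v, z v = 1 := by
        rw [← hsum_aux z, hzi, hzj, hrest z x hzv]
        have := hsum_aux x
        rw [hx1] at this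
        linarith [this]
      -- support bounds
      have hysupp : suppF y ⊆ (suppF x).erase j := by
        intro v hv
        have hvpos : 0 < y v := by
          have := Finset.mem_filter.1 hv
          exact this.2
        rcases eq_or_ne v j with rfl | hvj
        · rw [hyj] at hvpos; linarith
        rcases eq_or_ne v i with rfl | hvi
        · exact Finset.mem_erase.2 ⟨hij, hi⟩
        · rw [hyv v hvi hvj] at hvpos
          exact Finset.mem_erase.2 ⟨hvj, (hmemsupp v).2 hvpos⟩
      have hzsupp : suppF z ⊆ (suppF x).erase i := by
        intro v hv
        have hvpos : 0 < z v := (Finset.mem_filter.1 hv).2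
        rcases eq_or_ne v i with rfl | hvi
        · rw [hzi] at hvpos; linarith
        rcases eq_or_ne v j with rfl | hvj
        · exact Finset.mem_erase.2 ⟨hij.symm, hj⟩
        · rw [hzv v hvi hvj] at hvpos
          exact Finset.mem_erase.2 ⟨hvi, (hmemsupp v).2 hvpos⟩
      have hycard : (suppF y).card ≤ N := by
        have := Finset.card_le_card hysupp
        rw [Finset.card_erase_of_mem hj] at this
        omega
      have hzcard : (suppF z).card ≤ N := by
        have := Finset.card_le_card hzsupp
        rw [Finset.card_erase_of_mem hi] at this
        omega
      -- decomposition of products over cliques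
      have hdecomp : ∀ s ∈ ktCliques G t,
          ∏ v ∈ s, x v = lam * ∏ v ∈ s, y v + (1 - lam) * ∏ v ∈ s, z v := by
        intro s hs
        have hsclq := (ktCliques_mem.1 hs).2
        have hnotboth : ¬ (i ∈ s ∧ j ∈ s) := by
          rintro ⟨his, hjs⟩
          exact hnadj (hsclq his hjs hij)
        have hprodcong : ∀ (w : Fin n → ℝ), (∀ v, v ≠ i → v ≠ j → w v = x v) →
            ∀ (a : Fin n), (a = i ∨ a = j) → a ∈ s →
            ∏ v ∈ s.erase a, w v = ∏ v ∈ s.erase a, x v := by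
          intro w hw a ha has
          apply Finset.prod_congr rfl
          intro v hv
          have hv' := Finset.mem_erase.1 hv
          rcases ha with rfl | rfl
          · -- a = i; v ≠ i; if v = j then j ∈ s and i ∈ s contradiction
            exact hw v hv'.1 (fun hvj => hnotboth ⟨has, hvj ▸ hv'.2⟩)
          · exact hw v (fun hvi => hnotboth ⟨hvi ▸ hv'.2, has⟩) hv'.1
        by_cases his : i ∈ s
        · have hjs : j ∉ s := fun h => hnotboth ⟨his, h⟩
          have hx : ∏ v ∈ s, x v = x i * ∏ v ∈ s.erase i, x v :=
            (Finset.mul_prod_erase s x his).symm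
          have hyp : ∏ v ∈ s, y v = m * ∏ v ∈ s.erase i, x v := by
            rw [← Finset.mul_prod_erase s y his, hyi,
              hprodcong y (fun v hvi hvj => hyv v hvi hvj) i (Or.inl rfl) his]
          have hzp : ∏ v ∈ s, z v = 0 := Finset.prod_eq_zero his hzi
          rw [hx, hyp, hzp]
          rw [mul_zero, add_zero, ← mul_assoc, hlm]
        by_cases hjs : j ∈ s
        · have hx : ∏ v ∈ s, x v = x j * ∏ v ∈ s.erase j, x v :=
            (Finset.mul_prod_erase s x hjs).symm
          have hzp : ∏ v ∈ s, z v = m * ∏ v ∈ s.erase j, x v := by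
            rw [← Finset.mul_prod_erase s z hjs, hzj,
              hprodcong z (fun v hvi hvj => hzv v hvi hvj) j (Or.inr rfl) hjs]
          have hyp : ∏ v ∈ s, y v = 0 := Finset.prod_eq_zero hjs hyj
          rw [hx, hyp, hzp]
          rw [mul_zero, zero_add, ← mul_assoc, hlm']
        · have hyp : ∏ v ∈ s, y v = ∏ v ∈ s, x v := by
            apply Finset.prod_congr rfl
            intro v hv
            exact hyv v (fun h => his (h ▸ hv)) (fun h => hjs (h ▸ hv))
          have hzp : ∏ v ∈ s, z v = ∏ v ∈ s, x v := by
            apply Finset.prod_congr rfl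
            intro v hv
            exact hzv v (fun h => his (h ▸ hv)) (fun h => hjs (h ▸ hv))
          rw [hyp, hzp]
          ring
      -- linear part decomposition
      have hlin : ∀ v : Fin n,
          x v * (((cliqueAt G v).choose t : ℝ) / (cliqueAt G v : ℝ) ^ t)
          = lam * (y v * (((cliqueAt G v).choose t : ℝ) / (cliqueAt G v : ℝ) ^ t))
            + (1 - lam) * (z v * (((cliqueAt G v).choose t : ℝ) / (cliqueAt G v : ℝ) ^ t)) := by
        intro v
        rcases eq_or_ne v i with rfl | hvi
        · rw [hyi, hzi, ← hlm]; ring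
        rcases eq_or_ne v j with rfl | hvj
        · rw [hyj, hzj, ← hlm']; ring
        · rw [hyv v hvi hvj, hzv v hvi hvj]; ring
      -- apply IH
      have hy := ih y hycard hy0 hysum
      have hz := ih z hzcard hz0 hzsum
      calc ∑ s ∈ ktCliques G t, ∏ v ∈ s, x v
          = lam * (∑ s ∈ ktCliques G t, ∏ v ∈ s, y v)
            + (1 - lam) * (∑ s ∈ ktCliques G t, ∏ v ∈ s, z v) := by
            rw [Finset.mul_sum, Finset.mul_sum, ← Finset.sum_add_distrib]
            exact Finset.sum_congr rfl hdecomp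
        _ ≤ lam * (∑ v, y v * (((cliqueAt G v).choose t : ℝ) / (cliqueAt G v : ℝ) ^ t))
            + (1 - lam) * (∑ v, z v * (((cliqueAt G v).choose t : ℝ) / (cliqueAt G v : ℝ) ^ t)) := by
            apply add_le_add
            · exact mul_le_mul_of_nonneg_left hy (le_of_lt hlam0)
            · exact mul_le_mul_of_nonneg_left hz (by linarith)
        _ = ∑ v, x v * (((cliqueAt G v).choose t : ℝ) / (cliqueAt G v : ℝ) ^ t) := by
            rw [Finset.mul_sum, Finset.mul_sum, ← Finset.sum_add_distrib]
            exact (Finset.sum_congr rfl (fun v _ => hlin v)).symm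

/-- Vertex-localized Zykov bound (Theorem of the paper, inequality part). -/
theorem stmt0 {n : ℕ} (t : ℕ) (ht : 2 ≤ t) (G : SimpleGraph (Fin n))
    (hc : ∀ v : Fin n, 1 ≤ cliqueAt G v) :
    (numKt G t : ℝ) ≤
      (n : ℝ) ^ (t - 1) * ∑ v, ((cliqueAt G v).choose t : ℝ) / (cliqueAt G v : ℝ) ^ t := by
  rcases Nat.eq_zero_or_pos n with rfl | hn
  · have h0 : ktCliques G t = ∅ := by
      apply Finset.eq_empty_of_forall_notMem
      intro s hs
      have h1 := (ktCliques_mem.1 hs).1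
      have h2 : s.card ≤ 0 := by
        calc s.card ≤ (univ : Finset (Fin 0)).card := Finset.card_le_card (Finset.subset_univ s)
          _ = 0 := by simp
      omega
    rw [numKt, h0]
    simp
  · have hnn : (0:ℝ) < (n:ℝ) := by exact_mod_cast hn
    set x : Fin n → ℝ := fun _ => (n:ℝ)⁻¹ with hxdef
    have hx0 : ∀ i, 0 ≤ x i := fun i => by positivity
    have hx1 : ∑ i, x i = 1 := by
      rw [hxdef]
      rw [Finset.sum_const, Finset.card_univ, Fintype.card_fin, nsmul_eq_mul]
      exact mul_inv_cancel₀ (ne_of_gt hnn)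
    have hcard : (suppF x).card ≤ n := by
      calc (suppF x).card ≤ (univ : Finset (Fin n)).card :=
            Finset.card_le_card (Finset.subset_univ _)
        _ = n := by simp
    have hkey := key_ind G t ht n x hcard hx0 hx1
    set Sg : ℝ := ∑ v, ((cliqueAt G v).choose t : ℝ) / (cliqueAt G v : ℝ) ^ t with hSg
    have hSgnn : 0 ≤ Sg := by
      rw [hSg]
      apply Finset.sum_nonneg
      intro v _
      positivity
    have hLHS : ∑ s ∈ ktCliques G t, ∏ v ∈ s, x v = (numKt G t : ℝ) * ((n:ℝ)⁻¹) ^ t := by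
      rw [show ∑ s ∈ ktCliques G t, ∏ v ∈ s, x v
          = ∑ s ∈ ktCliques G t, ((n:ℝ)⁻¹) ^ t from Finset.sum_congr rfl (fun s hs => by
            rw [hxdef, Finset.prod_const, (ktCliques_mem.1 hs).1])]
      rw [Finset.sum_const, nsmul_eq_mul, numKt]
    have hRHS : ∑ v, x v * (((cliqueAt G v).choose t : ℝ) / (cliqueAt G v : ℝ) ^ t)
        = (n:ℝ)⁻¹ * Sg := by
      rw [hSg, Finset.mul_sum]
    rw [hLHS, hRHS] at hkey
    have hpow : (n:ℝ) ^ t = (n:ℝ) ^ (t-1) * n := by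
      rw [← pow_succ]
      congr 1
      omega
    calc (numKt G t : ℝ)
        = (numKt G t : ℝ) * ((n:ℝ)⁻¹ * n) ^ t := by
          rw [inv_mul_cancel₀ (ne_of_gt hnn)]; simp
      _ = ((numKt G t : ℝ) * ((n:ℝ)⁻¹) ^ t) * (n:ℝ) ^ t := by rw [mul_pow]; ring
      _ ≤ ((n:ℝ)⁻¹ * Sg) * (n:ℝ) ^ t := mul_le_mul_of_nonneg_right hkey (by positivity)
      _ = (n:ℝ) ^ (t-1) * Sg * ((n:ℝ)⁻¹ * n) := by rw [hpow]; ring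
      _ = (n:ℝ) ^ (t-1) * Sg := by rw [inv_mul_cancel₀ (ne_of_gt hnn)]; ring
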